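/- With every irreducible identity φ(z_1,...,z_k) = ψ(z_{k+1},...,z_l) (φ, ψ ∈ Φ, all z_i immediate) one can associate a sequence x_1,...,x_l of individual and nullary function variables of sort ind, with x_i ≡ x_j iff z_i ≡ z_j, such that for every infinite Φ-structure A: A ⊨_inj φ(z_1,...,z_k) = ψ(z_{k+1},...,z_l) if and only if A ⊨_inj φ(x_1,...,x_k) = ψ(x_{k+1},...,x_l). -/

import Mathlib

namespace McCarthy

/-- Sorts: individual (`ind`) and Boolean (`bool`). -/
inductive Srt where
  | ind | bool
deriving DecidableEq

/-- A function variable is identified by its sort, arity and index. -/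
abbrev FV : Type := Srt × ℕ × ℕ

/-- Explicit terms over a vocabulary `Φ`. -/
inductive Term (Φ : Type) where
  | tt : Term Φ
  | ff : Term Φ
  | ivar : ℕ → Term Φ
  | fapp : FV → List (Term Φ) → Term Φ
  | prim : Φ → List (Term Φ) → Term Φ
  | cond : Srt → Term Φ → Term Φ → Term Φ → Term Φ

variable {Φ : Type}

def isIvar : Term Φ → Bool
  | .ivar _ => true
  | _ => false

/-- Immediate terms: individual variables, or function variables applied to
individual variables (nullary function variables included). -/
def isImmediate : Term Φ → Bool
  | .ivar _ => true
  | .fapp p args => (args.all isIvar) && (args.length == p.2.1)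
  | _ => false

/-- Irreducible terms: immediate terms, Boolean constants, or applications
with immediate arguments. -/
def isIrreducible : Term Φ → Bool
  | .tt => true
  | .ff => true
  | .ivar _ => true
  | .fapp p args => ((args.all isIvar) && (args.length == p.2.1)) || args.all isImmediate
  | .prim _ args => args.all isImmediate
  | .cond _ a b c => isImmediate a && isImmediate b && isImmediate c

/-- The sort of an immediate (or irreducible non-`prim`) term. -/
def immSort : Term Φ → Srt
  | .tt => .bool
  | .ff => .bool
  | .fapp p _ => p.1
  | .cond s _ _ _ => s
  | _ => .ind

mutual
/-- `sizeT E` counts the occurrences of non-immediate proper subterms of `E`. -/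
def sizeT : Term Φ → ℕ
  | .tt => 0
  | .ff => 0
  | .ivar _ => 0
  | .fapp _ args => sizeTL args
  | .prim _ args => sizeTL args
  | .cond _ a b c =>
      (sizeT a + (if isImmediate a then 0 else 1)) +
      (sizeT b + (if isImmediate b then 0 else 1)) +
      (sizeT c + (if isImmediate c then 0 else 1))

def sizeTL : List (Term Φ) → ℕ
  | [] => 0
  | t :: ts => (sizeT t + (if isImmediate t then 0 else 1)) + sizeTL ts
end

mutual
/-- Renaming of function variables. -/
def renameF (ρ : FV → FV) : Term Φ → Term Φ
  | .tt => .tt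
  | .ff => .ff
  | .ivar i => .ivar i
  | .fapp p args => .fapp (ρ p) (renameFL ρ args)
  | .prim f args => .prim f (renameFL ρ args)
  | .cond s a b c => .cond s (renameF ρ a) (renameF ρ b) (renameF ρ c)

def renameFL (ρ : FV → FV) : List (Term Φ) → List (Term Φ)
  | [] => []
  | t :: ts => renameF ρ t :: renameFL ρ ts
end

mutual
/-- Renaming of individual variables. -/
def renameV (σ : ℕ → ℕ) : Term Φ → Term Φ
  | .tt => .tt
  | .ff => .ff
  | .ivar i => .ivar (σ i)
  | .fapp p args => .fapp p (renameVL σ args)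
  | .prim f args => .prim f (renameVL σ args)
  | .cond s a b c => .cond s (renameV σ a) (renameV σ b) (renameV σ c)

def renameVL (σ : ℕ → ℕ) : List (Term Φ) → List (Term Φ)
  | [] => []
  | t :: ts => renameV σ t :: renameVL σ ts
end

mutual
/-- Does the function variable `q` occur in the term? -/
def occursF (q : FV) : Term Φ → Bool
  | .tt => false
  | .ff => false
  | .ivar _ => false
  | .fapp p args => (decide (p = q)) || occursFL q args
  | .prim _ args => occursFL q args
  | .cond _ a b c => occursF q a || occursF q b || occursF q c

def occursFL (q : FV) : List (Term Φ) → Bool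
  | [] => false
  | t :: ts => occursF q t || occursFL q ts
end


/-! ## Extended recursive programs -/

/-- A body equation `p(x⃗) = rhs`. -/
structure Eqn (Φ : Type) where
  p : FV
  xs : List ℕ
  rhs : Term Φ

/-- An extended recursive program `E₀(x⃗) where { p₁(x⃗₁) = E₁, …, p_K(x⃗_K) = E_K }`,
with the body represented as a multiset (set representation of the paper). -/
structure ExtProg (Φ : Type) where
  fvars : List ℕ
  head : Term Φ
  body : Multiset (Eqn Φ)

/-- The function variables bound by the body of a program. -/
def bodyPvars (E : ExtProg Φ) : Multiset FV := E.body.map Eqn.p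

/-- `q` is fresh for `E`: it is not a recursion variable of `E` and occurs nowhere in `E`. -/
def FreshIn (q : FV) (E : ExtProg Φ) : Prop :=
  occursF q E.head = false ∧ ∀ e ∈ E.body, e.p ≠ q ∧ occursF q e.rhs = false

/-- The argument list of an application term (the empty list otherwise). -/
def argsOf : Term Φ → List (Term Φ)
  | .fapp _ as => as
  | .prim _ as => as
  | .cond _ a b c => [a, b, c]
  | _ => []

/-- Replace the argument list of an application term. -/
def withArgs : Term Φ → List (Term Φ) → Term Φ
  | .fapp p _, as => .fapp p as
  | .prim f _, as => .prim f as
  | .cond s _ _ _, [a, b, c] => .cond s a b c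
  | t, _ => t

def isApp : Term Φ → Bool
  | .fapp _ _ => true
  | .prim _ _ => true
  | .cond _ _ _ _ => true
  | _ => false

/-- Labels `(p, j, q)` of arrow reductions. -/
abbrev Lbl : Type := FV × ℕ × FV

/-- The arrow-reduction relation `E(x⃗) →^{(p,j,q)} F(x⃗)` on extended programs:
either a non-immediate `j`-th argument of the (outermost application) right-hand side
of the body equation for `p` is split off into a new equation for the fresh variable `q`
(body case), or — when `p` is fresh, serving merely as a marker — the non-immediate
`j`-th argument of the head is split off (head case). -/
inductive Step : Lbl → ExtProg Φ → ExtProg Φ → Prop where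
  | body (p : FV) (j : ℕ) (q : FV) (E F : ExtProg Φ) (s : Multiset (Eqn Φ)) (e : Eqn Φ)
      (G : Term Φ)
      (hbody : E.body = s + {e}) (hp : e.p = p) (happ : isApp e.rhs = true)
      (hG : (argsOf e.rhs)[j]? = some G) (himm : isImmediate G = false)
      (hq : FreshIn q E) (har : q.2.1 = e.xs.length)
      (hF : F = ⟨E.fvars, E.head,
        s + {⟨p, e.xs, withArgs e.rhs ((argsOf e.rhs).set j (.fapp q (e.xs.map Term.ivar)))⟩,
             ⟨q, e.xs, G⟩}⟩) :
      Step (p, j, q) E F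
  | head (p : FV) (j : ℕ) (q : FV) (E F : ExtProg Φ) (G : Term Φ)
      (hp : FreshIn p E) (hq : FreshIn q E) (hpq : p ≠ q) (happ : isApp E.head = true)
      (hG : (argsOf E.head)[j]? = some G) (himm : isImmediate G = false)
      (har : q.2.1 = E.fvars.length)
      (hF : F = ⟨E.fvars,
        withArgs E.head ((argsOf E.head).set j (.fapp q (E.fvars.map Term.ivar))),
        E.body + {⟨q, E.fvars, G⟩}⟩) :
      Step (p, j, q) E F

/-- One-step reduction: arrow reduction for some label. -/
def Step1 (E F : ExtProg Φ) : Prop := ∃ l : Lbl, Step l E F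

/-- The `~_E` relation on function variables used in the Amalgamation Lemma:
`p ~_E p'` iff both are the same recursion variable of `E` (body case) or
neither is a recursion variable of `E` (head case). -/
def SameCase (E : ExtProg Φ) (p p' : FV) : Prop :=
  (p = p' ∧ p ∈ bodyPvars E) ∨ (p ∉ bodyPvars E ∧ p' ∉ bodyPvars E)

/-- Size of an extended program: total number of occurrences of non-immediate
proper subterms of its parts. -/
def sizeP (E : ExtProg Φ) : ℕ := sizeT E.head + (E.body.map (fun e => sizeT e.rhs)).sum

/-- An extended program is irreducible if all its parts are irreducible terms. -/
def IrrProg (E : ExtProg Φ) : Prop :=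
  isIrreducible E.head = true ∧ ∀ e ∈ E.body, isIrreducible e.rhs = true

/-! ## Congruence -/

/-- `ρ` preserves sorts and arities of function variables. -/
def SortArityPres (ρ : FV → FV) : Prop := ∀ v : FV, (ρ v).1 = v.1 ∧ (ρ v).2.1 = v.2.1

/-- One equation is obtained from another by renaming the (bound) individual
variables and applying a renaming `ρ` of the function variables. -/
def EqnCong (ρ : FV → FV) (e f : Eqn Φ) : Prop :=
  f.p = ρ e.p ∧ ∃ σ : ℕ → ℕ,
    (∀ a ∈ e.xs, ∀ b ∈ e.xs, σ a = σ b → a = b) ∧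
    f.xs = e.xs.map σ ∧ f.rhs = renameV σ (renameF ρ e.rhs)

/-- Congruence of extended programs: an alphabetic change of the bound individual
and function variables together with a permutation of the body equations
(the latter being automatic in the multiset representation). -/
def Congruent (E F : ExtProg Φ) : Prop :=
  ∃ ρ : FV → FV, Function.Bijective ρ ∧ SortArityPres ρ ∧
    (∀ p : FV, p ∉ bodyPvars E → ρ p = p) ∧
    F.fvars = E.fvars ∧ F.head = renameF ρ E.head ∧
    Multiset.Rel (EqnCong ρ) E.body F.body

/-- Full reduction: a (possibly empty) chain of one-step reductions followed by a
congruence, i.e. `E ≡_c F` or `E →₁ ⋯ →₁ F' ≡_c F`. -/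
def Reduces (E F : ExtProg Φ) : Prop :=
  ∃ G : ExtProg Φ, Relation.ReflTransGen Step1 E G ∧ Congruent G F


/-! ## Semantics -/

section Semantics

variable {A : Type}

/-- An environment for the function variables: a partial function
`Aⁿ ⇀ A ⊕ Bool` for each function variable (`none` = divergence). -/
abbrev Env (A : Type) : Type := FV → List A → Option (A ⊕ Bool)

/-- A `Φ`-structure on the universe `A`: a partial interpretation of each
primitive (`Sum.inl` for sort `ind`, `Sum.inr` for sort `bool`). -/
abbrev Struc (Φ A : Type) : Type := Φ → List A → Option (A ⊕ Bool)

/-- An environment is sort- and arity-respecting. -/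
def GoodEnv (env : Env A) : Prop :=
  ∀ p : FV, ∀ as v, env p as = some v →
    as.length = p.2.1 ∧ (p.1 = Srt.ind → ∃ a, v = Sum.inl a) ∧
    (p.1 = Srt.bool → ∃ b, v = Sum.inr b)

/-- A structure is sort- and arity-respecting. -/
def GoodStruc (St : Struc Φ A) (arΦ : Φ → ℕ) (sΦ : Φ → Srt) : Prop :=
  ∀ φ as v, St φ as = some v →
    as.length = arΦ φ ∧ (sΦ φ = Srt.ind → ∃ a, v = Sum.inl a) ∧
    (sΦ φ = Srt.bool → ∃ b, v = Sum.inr b)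

/-- A structure is total (on arguments of the right arity). -/
def TotalStruc (St : Struc Φ A) (arΦ : Φ → ℕ) : Prop :=
  ∀ φ as, as.length = arΦ φ → (St φ as).isSome

mutual
/-- Kleene evaluation of terms: `none` means divergence; arguments of
applications are evaluated strictly and must be of sort `ind`; the conditional
evaluates its test first and then the selected branch. -/
def eval (St : Struc Φ A) (iv : ℕ → A) (env : Env A) : Term Φ → Option (A ⊕ Bool)
  | .tt => some (Sum.inr true)
  | .ff => some (Sum.inr false)
  | .ivar i => some (Sum.inl (iv i))
  | .fapp p args =>
      match evalArgs St iv env args with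
      | none => none
      | some as => env p as
  | .prim f args =>
      match evalArgs St iv env args with
      | none => none
      | some as => St f as
  | .cond _ a b c =>
      match eval St iv env a with
      | some (Sum.inr true) => eval St iv env b
      | some (Sum.inr false) => eval St iv env c
      | _ => none

def evalArgs (St : Struc Φ A) (iv : ℕ → A) (env : Env A) :
    List (Term Φ) → Option (List A)
  | [] => some []
  | t :: ts =>
      match eval St iv env t with
      | some (Sum.inl a) =>
          match evalArgs St iv env ts with
          | some as => some (a :: as)
          | none => none
      | _ => none
end

/-- Validity of the identity `E = F` in the structure: Kleene strong equality
under every assignment of individuals to the individual variables and of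
sort-respecting partial functions to the function variables. -/
def Valid (St : Struc Φ A) (E F : Term Φ) : Prop :=
  ∀ (iv : ℕ → A) (env : Env A), GoodEnv env → eval St iv env E = eval St iv env F

/-- An individual variable is *placed* in the identity
`φ(zs₁) = ψ(zs₂)` if it is one of the listed immediate arguments. -/
def Placed (zs₁ zs₂ : List (Term Φ)) (s : ℕ) : Prop := Term.ivar s ∈ zs₁ ++ zs₂

/-- Injective validity `A ⊨_inj φ(zs₁) = ψ(zs₂)`: validity under all
assignments which are injective on the placed individual variables. -/
def ValidInjId (St : Struc Φ A) (φ ψ : Φ) (zs₁ zs₂ : List (Term Φ)) : Prop :=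
  ∀ (iv : ℕ → A) (env : Env A), GoodEnv env →
    (∀ s t, Placed zs₁ zs₂ s → Placed zs₁ zs₂ t → iv s = iv t → s = t) →
    eval St iv env (.prim φ zs₁) = eval St iv env (.prim ψ zs₂)

/-- Bind the variables `xs` to the values `as` on top of the assignment `iv`. -/
def bindList (xs : List ℕ) (as : List A) (iv : ℕ → A) (i : ℕ) : A :=
  match xs.findIdx? (· = i) with
  | some k => as.getD k (iv i)
  | none => iv i

/-- `env` solves the system of recursive equations in the body of `E`. -/
def Solves (St : Struc Φ A) (iv : ℕ → A) (E : ExtProg Φ) (env : Env A) : Prop :=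
  ∀ e ∈ E.body, ∀ as : List A, as.length = e.xs.length →
    env e.p as = eval St (bindList e.xs as iv) env e.rhs

/-- The pointwise partial-function (information) ordering on environments. -/
def envLE (env env' : Env A) : Prop :=
  ∀ p as, env p as = none ∨ env p as = env' p as

/-- `Den St iv E w` : the denotation of the extended program `E` at the
assignment `iv` is `w`, computed by evaluating the head at the least solution
of the body. -/
def Den (St : Struc Φ A) (iv : ℕ → A) (E : ExtProg Φ) (w : Option (A ⊕ Bool)) : Prop :=
  ∃ env : Env A, Solves St iv E env ∧ (∀ env', Solves St iv E env' → envLE env env') ∧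
    eval St iv env E.head = w

/-! ## Recursors and intensions -/

/-- The renaming of individual variables matching the list `xs` with the list `ys`. -/
def bindRen (xs ys : List ℕ) (i : ℕ) : ℕ :=
  match xs.findIdx? (· = i) with
  | some k => ys.getD k i
  | none => i

/-- The parts of two irreducible programs define the same functional, modulo the
renaming `ρ` of the recursion variables and the matching of the bound individual
variables. -/
def EqnSemEq (St : Struc Φ A) (ρ : FV → FV) (e f : Eqn Φ) : Prop :=
  e.p = ρ f.p ∧ e.xs.length = f.xs.length ∧
  ∀ (iv : ℕ → A) (env : Env A), GoodEnv env →
    eval St iv env e.rhs = eval St iv env (renameV (bindRen f.xs e.xs) (renameF ρ f.rhs))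

/-- The recursors of `E` and `F` on the structure are equal (strongly
isomorphic): the bodies match up to a sort- and arity-preserving bijection of the
recursion variables, with the corresponding parts denoting the same functionals. -/
def RecEq (St : Struc Φ A) (E F : ExtProg Φ) : Prop :=
  ∃ ρ : FV → FV, Function.Bijective ρ ∧ SortArityPres ρ ∧
    (∀ (iv : ℕ → A) (env : Env A), GoodEnv env →
      eval St iv env E.head = eval St iv env (renameF ρ F.head)) ∧
    Multiset.Rel (EqnSemEq St ρ) E.body F.body

/-- Intensional equivalence on a structure: the referential intensions (the
recursors of the canonical forms) of the two programs are equal. -/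
def IntEqOn (St : Struc Φ A) (E F : ExtProg Φ) : Prop :=
  ∃ E' F' : ExtProg Φ, Reduces E E' ∧ IrrProg E' ∧ Reduces F F' ∧ IrrProg F' ∧
    RecEq St E' F'

end Semantics

/-- Global intensional equivalence: equal referential intensions in every
infinite `Φ`-structure. -/
def GlobalIntEq (E F : ExtProg Φ) : Prop :=
  ∀ (A : Type) (St : Struc Φ A), Infinite A → IntEqOn St E F

/-- A program is proper if none of its parts is an immediate term of Boolean sort. -/
def ProperProg (E : ExtProg Φ) : Prop :=
  ¬(isImmediate E.head = true ∧ immSort E.head = Srt.bool) ∧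
  ∀ e ∈ E.body, ¬(isImmediate e.rhs = true ∧ immSort e.rhs = Srt.bool)


/-! ## Pure algebraic terms (Statement 0) -/

/-- Pure algebraic terms: built only from individual variables and function
variables of sort `ind` (of the correct arities) by application. -/
inductive PureAlg : Term Φ → Prop where
  | ivar (i : ℕ) : PureAlg (.ivar i)
  | fapp (n i : ℕ) (args : List (Term Φ)) (hargs : ∀ t ∈ args, PureAlg t)
      (hlen : args.length = n) : PureAlg (.fapp (Srt.ind, n, i) args)

/-! ## Bare identities (Statements 14, 16) -/

/-- A term is an individual variable or a nullary function variable of sort `ind`. -/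
def BareVarT (t : Term Φ) : Prop :=
  (∃ i, t = Term.ivar i) ∨ (∃ i, t = Term.fapp (Srt.ind, 0, i) [])

/-- A bare variable: `(false, i)` codes the individual variable `v_i`,
`(true, i)` codes the nullary function variable `p^{ind,0}_i`. -/
abbrev BareVar : Type := Bool × ℕ

/-- Canonical choice of bare variables: each variable occurring for the first
time is the first unused variable of its kind in the fixed alternating list
`v₀, p₀, v₁, p₁, …`. -/
def CanonicalBare (xs : List BareVar) : Prop :=
  ∀ i x, xs[i]? = some x → (∀ j < i, xs[j]? ≠ some x) →
    x.2 = (((xs.take i).filter (fun y => y.1 == x.1)).dedup).length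

/-- The representative function of an equivalence relation `r` on the placed
variables: a placed variable is sent to the least element of its class. -/
noncomputable def repFun (placed : ℕ → Prop) (r : ℕ → ℕ → Prop) (s : ℕ) : ℕ :=
  open Classical in
  if placed s then sInf {j | r s j} else s

/-! ## Propositional programs coding graphs (Statement 19) -/

/-- The propositional variable `r`. -/
def rVar : FV := (Srt.bool, 0, 0)

/-- The propositional variable `p_i`. -/
def pVar (n : ℕ) (i : Fin n) : FV := (Srt.bool, 0, 1 + (i : ℕ))

/-- The propositional variable `p_{ij}`. -/
def pijVar (n : ℕ) (i j : Fin n) : FV := (Srt.bool, 0, 1 + n + ((i : ℕ) * n + (j : ℕ)))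

/-- The part `E_{ij}` of the program coding the graph `E`. -/
def edgeTerm (n : ℕ) (E : Fin n → Fin n → Bool) (i j : Fin n) : Term Empty :=
  if E i j then
    .cond Srt.bool (.fapp (pVar n i) []) (.fapp (pVar n j) []) (.fapp rVar [])
  else
    .cond Srt.bool (.fapp (pVar n i) []) (.fapp rVar []) (.fapp (pVar n j) [])

/-- The irreducible propositional program `prog(E)` coding the graph `E`:
`true where { p_i = p_i : i < n } ∪ { p_{ij} = E_{ij} : i,j < n } ∪ { r = false }`. -/
def graphProg (n : ℕ) (E : Fin n → Fin n → Bool) : ExtProg Empty where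
  fvars := []
  head := .tt
  body :=
    (Finset.univ.val.map (fun i : Fin n => (⟨pVar n i, [], .fapp (pVar n i) []⟩ : Eqn Empty)))
    + ((Finset.univ.val (α := Fin n × Fin n)).map
        (fun ij => (⟨pijVar n ij.1 ij.2, [], edgeTerm n E ij.1 ij.2⟩ : Eqn Empty)))
    + {⟨rVar, [], .ff⟩}

section Stmt14Aux

variable {Φ : Type}

/-- The index of an individual variable. -/
def varIdx : Term Φ → ℕ
  | .ivar k => k
  | _ => 0

/-- Shape of immediate terms of sort `ind`. -/
lemma imm_shape {t : Term Φ} (h1 : isImmediate t = true) (h2 : immSort t = Srt.ind) :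
    (∃ k, t = Term.ivar k) ∨
    ∃ n m bs, t = Term.fapp (Srt.ind, n, m) bs ∧ bs.length = n ∧
      ∀ b ∈ bs, ∃ k, b = Term.ivar k := by
  cases t with
  | ivar k => exact Or.inl ⟨k, rfl⟩
  | fapp p args =>
      obtain ⟨s, n, m⟩ := p
      right
      simp only [immSort] at h2
      subst h2
      simp only [isImmediate, Bool.and_eq_true, List.all_eq_true, beq_iff_eq] at h1
      refine ⟨n, m, args, rfl, h1.2, fun b hb => ?_⟩
      have hb' := h1.1 b hb
      cases b <;> simp [isIvar] at hb' ⊢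
  | tt => simp [isImmediate] at h1
  | ff => simp [isImmediate] at h1
  | prim f args => simp [isImmediate] at h1
  | cond s a b c => simp [isImmediate] at h1

/-- The associated bare variable of an immediate term, relative to the list `l`. -/
noncomputable def Xt (l : List (Term Φ)) (t : Term Φ) : Term Φ :=
  match t with
  | .ivar k => .ivar k
  | t => .fapp (Srt.ind, 0, sInf {j | l[j]? = some t}) []

lemma Xt_cases (l : List (Term Φ)) (t : Term Φ) :
    (∃ k, t = Term.ivar k ∧ Xt l t = Term.ivar k) ∨
    ((∀ k, t ≠ Term.ivar k) ∧
      Xt l t = Term.fapp (Srt.ind, 0, sInf {j | l[j]? = some t}) []) := by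
  cases t <;> simp [Xt]

lemma get?_sInf (l : List (Term Φ)) {t : Term Φ} (ht : t ∈ l) :
    l[sInf {j : ℕ | l[j]? = some t}]? = some t := by
  have hne : {j : ℕ | l[j]? = some t}.Nonempty := by
    obtain ⟨n, hn⟩ := List.mem_iff_getElem?.mp ht
    exact ⟨n, hn⟩
  exact Nat.sInf_mem hne

lemma Xt_inj (l : List (Term Φ)) {t t' : Term Φ} (ht : t ∈ l) (ht' : t' ∈ l)
    (h : Xt l t = Xt l t') : t = t' := by
  rcases Xt_cases l t with ⟨k, rfl, hx⟩ | ⟨hk, hx⟩ <;>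
    rcases Xt_cases l t' with ⟨k', rfl, hx'⟩ | ⟨hk', hx'⟩ <;>
      rw [hx, hx'] at h
  · exact h
  · exact absurd h (by simp)
  · exact absurd h (by simp)
  · have hidx : sInf {j : ℕ | l[j]? = some t} = sInf {j : ℕ | l[j]? = some t'} := by
      injection h with h1 _
      exact (Prod.ext_iff.mp ((Prod.ext_iff.mp h1).2)).2
    have := get?_sInf l ht
    rw [hidx, get?_sInf l ht'] at this
    exact (Option.some.inj this).symm

section Sem

variable {A : Type}

lemma evalArgs_map (St : Struc Φ A) (iv1 iv2 : ℕ → A) (env1 env2 : Env A)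
    (f : Term Φ → Term Φ) :
    ∀ ts : List (Term Φ), (∀ t ∈ ts, eval St iv1 env1 t = eval St iv2 env2 (f t)) →
      evalArgs St iv1 env1 ts = evalArgs St iv2 env2 (ts.map f) := by
  intro ts
  induction ts with
  | nil => intro _; simp [evalArgs]
  | cons t ts ih =>
      intro h
      simp only [List.map_cons]
      rw [evalArgs, evalArgs, h t (by simp),
        ih (fun u hu => h u (List.mem_cons_of_mem _ hu))]

lemma eval_prim_congr (St : Struc Φ A) (iv1 iv2 : ℕ → A) (env1 env2 : Env A)
    (φ : Φ) (ts1 ts2 : List (Term Φ))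
    (h : evalArgs St iv1 env1 ts1 = evalArgs St iv2 env2 ts2) :
    eval St iv1 env1 (.prim φ ts1) = eval St iv2 env2 (.prim φ ts2) := by
  rw [eval, eval, h]

lemma evalArgs_ivars (St : Struc Φ A) (iv : ℕ → A) (env : Env A) :
    ∀ bs : List (Term Φ), (∀ b ∈ bs, ∃ k, b = Term.ivar k) →
      evalArgs St iv env bs = some (bs.map (fun b => iv (varIdx b))) := by
  intro bs
  induction bs with
  | nil => intro _; simp [evalArgs]
  | cons b bs ih =>
      intro h
      obtain ⟨k, rfl⟩ := h b (by simp)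
      rw [evalArgs, eval, ih (fun u hu => h u (List.mem_cons_of_mem _ hu))]
      simp [varIdx]

lemma eval_fapp (St : Struc Φ A) (iv : ℕ → A) (env : Env A) (p : FV)
    (bs : List (Term Φ)) (as : List A) (h : evalArgs St iv env bs = some as) :
    eval St iv env (.fapp p bs) = env p as := by
  rw [eval, h]

lemma eval_fapp_none (St : Struc Φ A) (iv : ℕ → A) (env : Env A) (p : FV)
    (bs : List (Term Φ)) (h : evalArgs St iv env bs = none) :
    eval St iv env (.fapp p bs) = none := by
  rw [eval, h]

lemma eval_fapp_nil (St : Struc Φ A) (iv : ℕ → A) (env : Env A) (p : FV) :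
    eval St iv env (.fapp p []) = env p [] := by
  rw [eval, evalArgs]

lemma map_ivar_inj {g : ℕ → A} (hg : Function.Injective g) :
    ∀ bs bs' : List (Term Φ), (∀ b ∈ bs, ∃ k, b = Term.ivar k) →
      (∀ b ∈ bs', ∃ k, b = Term.ivar k) →
      bs.map (fun b => g (varIdx b)) = bs'.map (fun b => g (varIdx b)) → bs = bs' := by
  intro bs
  induction bs with
  | nil =>
      intro bs' _ _ h
      cases bs' with
      | nil => rfl
      | cons b bs' => simp at h
  | cons b bs ih =>
      intro bs' h1 h2 h
      cases bs' with
      | nil => simp at h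
      | cons b' bs'' =>
          simp only [List.map_cons, List.cons.injEq] at h
          obtain ⟨k, rfl⟩ := h1 b (by simp)
          obtain ⟨k', rfl⟩ := h2 b' (by simp)
          have hk : k = k' := hg (by simpa [varIdx] using h.1)
          rw [hk, ih bs'' (fun u hu => h1 u (List.mem_cons_of_mem _ hu))
            (fun u hu => h2 u (List.mem_cons_of_mem _ hu)) h.2]

end Sem

end Stmt14Aux

/-- With every irreducible identity `φ(z₁,…,z_k) = ψ(z_{k+1},…,z_l)`
one can associate a sequence of individual and nullary function variables of sort
`ind` with the same identity pattern as the `zᵢ`, such that for every infinite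
`Φ`-structure the original identity is injectively valid iff the associated bare
identity is. -/
theorem statement14 {Φ : Type} (arΦ : Φ → ℕ) (sΦ : Φ → Srt) (φ ψ : Φ)
    (zs₁ zs₂ : List (Term Φ))
    (hz : ∀ z ∈ zs₁ ++ zs₂, isImmediate z = true ∧ immSort z = Srt.ind)
    (hl₁ : zs₁.length = arΦ φ) (hl₂ : zs₂.length = arΦ ψ) :
    ∃ xs₁ xs₂ : List (Term Φ),
      xs₁.length = zs₁.length ∧ xs₂.length = zs₂.length ∧
      (∀ x ∈ xs₁ ++ xs₂, BareVarT x) ∧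
      (∀ i j : ℕ, (xs₁ ++ xs₂)[i]? = (xs₁ ++ xs₂)[j]? ↔
        (zs₁ ++ zs₂)[i]? = (zs₁ ++ zs₂)[j]?) ∧
      ∀ (A : Type) (St : Struc Φ A), Infinite A → GoodStruc St arΦ sΦ →
        (ValidInjId St φ ψ zs₁ zs₂ ↔ ValidInjId St φ ψ xs₁ xs₂) := by
  classical
  refine ⟨zs₁.map (Xt (zs₁ ++ zs₂)), zs₂.map (Xt (zs₁ ++ zs₂)), by simp, by simp, ?_, ?_, ?_⟩
  · -- bare variables
    intro x hx
    rw [← List.map_append] at hx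
    obtain ⟨t, ht, rfl⟩ := List.mem_map.mp hx
    rcases Xt_cases (zs₁ ++ zs₂) t with ⟨k, rfl, hx'⟩ | ⟨hk, hx'⟩
    · exact Or.inl ⟨k, hx'⟩
    · exact Or.inr ⟨_, hx'⟩
  · -- pattern
    intro i j
    rw [← List.map_append, List.getElem?_map, List.getElem?_map]
    cases hi : (zs₁ ++ zs₂)[i]? <;> cases hj : (zs₁ ++ zs₂)[j]? <;> simp
    constructor
    · exact fun h => Xt_inj _ (List.mem_of_getElem? hi) (List.mem_of_getElem? hj) h
    · rintro rfl; rfl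
  · -- semantics
    intro A St hInf hGood
    have hsh : ∀ t ∈ zs₁ ++ zs₂, (∃ k, t = Term.ivar k) ∨
        ∃ n m bs, t = Term.fapp (Srt.ind, n, m) bs ∧ bs.length = n ∧
          ∀ b ∈ bs, ∃ k, b = Term.ivar k :=
      fun t ht => imm_shape (hz t ht).1 (hz t ht).2
    have hplaced : ∀ s, Placed (zs₁.map (Xt (zs₁ ++ zs₂))) (zs₂.map (Xt (zs₁ ++ zs₂))) s ↔
        Placed zs₁ zs₂ s := by
      intro s
      unfold Placed
      rw [← List.map_append]
      constructor
      · intro h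
        obtain ⟨t, ht, hXt⟩ := List.mem_map.mp h
        rcases Xt_cases (zs₁ ++ zs₂) t with ⟨k, rfl, hx'⟩ | ⟨hk, hx'⟩
        · rw [hx'] at hXt
          obtain rfl : k = s := by injection hXt
          exact ht
        · rw [hx'] at hXt
          exact absurd hXt (by simp)
      · intro h
        exact List.mem_map.mpr ⟨Term.ivar s, h, rfl⟩
    constructor
    · -- forward (hard) direction
      intro hV iv env hGoodEnv hinj
      have hP : ∀ s t, Term.ivar s ∈ zs₁ ++ zs₂ → Term.ivar t ∈ zs₁ ++ zs₂ →
          iv s = iv t → s = t := by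
        intro s t hs ht h
        exact hinj s t ((hplaced s).mpr hs) ((hplaced t).mpr ht) h
      -- fresh values
      have hfin : (iv '' {k | Term.ivar k ∈ zs₁ ++ zs₂}).Finite := by
        apply Set.Finite.image
        have : {k | (Term.ivar k : Term Φ) ∈ zs₁ ++ zs₂} =
            (fun k => (Term.ivar k : Term Φ)) ⁻¹' {t | t ∈ zs₁ ++ zs₂} := rfl
        rw [this]
        apply Set.Finite.preimage ?_ (List.finite_toSet (zs₁ ++ zs₂))
        intro a _ b _ h
        injection h
      have hcompl : ((iv '' {k | Term.ivar k ∈ zs₁ ++ zs₂})ᶜ : Set A).Infinite :=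
        Set.Finite.infinite_compl hfin
      obtain e := hcompl.natEmbedding
      have hf_inj : Function.Injective (fun n => (e n : A)) :=
        fun a b h => e.injective (Subtype.ext h)
      have hf_not : ∀ n k, Term.ivar k ∈ zs₁ ++ zs₂ → (e n : A) ≠ iv k := by
        intro n k hk h
        exact (e n).2 ⟨k, hk, h.symm⟩
      set iv' : ℕ → A := fun k => if Term.ivar k ∈ zs₁ ++ zs₂ then iv k else (e k : A)
        with hiv'
      have hiv'_inj : Function.Injective iv' := by
        intro a b h
        by_cases ha : Term.ivar a ∈ zs₁ ++ zs₂ <;> by_cases hb : Term.ivar b ∈ zs₁ ++ zs₂ <;>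
          simp only [hiv', ha, hb, if_pos, if_neg, if_true, if_false] at h
        · exact hP a b ha hb h
        · exact absurd h.symm (hf_not b a ha)
        · exact absurd h (hf_not a b hb)
        · exact hf_inj h
      have hiv'_eq : ∀ k, Term.ivar k ∈ zs₁ ++ zs₂ → iv' k = iv k := fun k hk => if_pos hk
      -- the environment realizing the bare values
      obtain ⟨env', henv'⟩ : ∃ env' : Env A, ∀ p as, env' p as =
          if h : ∃ t, t ∈ zs₁ ++ zs₂ ∧ ∃ bs, t = Term.fapp p bs ∧
              as = bs.map (fun b => iv' (varIdx b)) then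
            eval St iv env (Xt (zs₁ ++ zs₂) h.choose)
          else none := ⟨_, fun _ _ => rfl⟩
      have huniq : ∀ (p : FV) (as : List A) (t t' : Term Φ),
          t ∈ zs₁ ++ zs₂ → t' ∈ zs₁ ++ zs₂ →
          (∃ bs, t = Term.fapp p bs ∧ as = bs.map (fun b => iv' (varIdx b))) →
          (∃ bs, t' = Term.fapp p bs ∧ as = bs.map (fun b => iv' (varIdx b))) → t = t' := by
        rintro p as t t' ht ht' ⟨bs, rfl, hbs⟩ ⟨bs', rfl, hbs'⟩
        have h1 : ∀ b ∈ bs, ∃ k, b = Term.ivar k := by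
          rcases hsh _ ht with ⟨k, hk⟩ | ⟨n, m, bs0, heq, _, hivs⟩
          · exact absurd hk (by simp)
          · injection heq with _ hbs0
            subst hbs0
            exact hivs
        have h2 : ∀ b ∈ bs', ∃ k, b = Term.ivar k := by
          rcases hsh _ ht' with ⟨k, hk⟩ | ⟨n, m, bs0, heq, _, hivs⟩
          · exact absurd hk (by simp)
          · injection heq with _ hbs0
            subst hbs0
            exact hivs
        rw [map_ivar_inj hiv'_inj bs bs' h1 h2 (hbs.symm.trans hbs')]
      have henv'_spec : ∀ t ∈ zs₁ ++ zs₂, ∀ p bs, t = Term.fapp p bs →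
          env' p (bs.map (fun b => iv' (varIdx b))) = eval St iv env (Xt (zs₁ ++ zs₂) t) := by
        intro t ht p bs htEq
        have hex : ∃ t', t' ∈ zs₁ ++ zs₂ ∧ ∃ bs', t' = Term.fapp p bs' ∧
            (bs.map (fun b => iv' (varIdx b))) = bs'.map (fun b => iv' (varIdx b)) :=
          ⟨t, ht, bs, htEq, rfl⟩
        rw [henv', dif_pos hex]
        obtain ⟨ht', hbs'⟩ := hex.choose_spec
        rw [huniq p _ _ _ ht' ht hbs' ⟨bs, htEq, rfl⟩]
      have hGoodEnv' : GoodEnv env' := by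
        intro p as v hv
        rw [henv'] at hv
        split at hv
        case isFalse => exact absurd hv (by simp)
        case isTrue h =>
          obtain ⟨ht, bs, htEq, hasEq⟩ : h.choose ∈ zs₁ ++ zs₂ ∧ ∃ bs,
              h.choose = Term.fapp p bs ∧ as = bs.map (fun b => iv' (varIdx b)) :=
            h.choose_spec
          rcases hsh _ ht with ⟨k, hk⟩ | ⟨n, m, bs0, heq, hlen, hivs⟩
          · rw [htEq] at hk
            exact absurd hk (by simp)
          · rw [htEq] at heq
            injection heq with hp hbs0
            subst hbs0
            refine ⟨?_, ?_, ?_⟩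
            · rw [hasEq, hp]
              simp [hlen]
            · intro _
              rcases Xt_cases (zs₁ ++ zs₂) h.choose with ⟨k, hk, _⟩ | ⟨_, hx⟩
              · rw [htEq] at hk
                exact absurd hk (by simp)
              · rw [hx, eval_fapp_nil] at hv
                exact (hGoodEnv _ _ _ hv).2.1 rfl
            · intro hcontra
              rw [hp] at hcontra
              simp at hcontra
      have hpoint : ∀ t ∈ zs₁ ++ zs₂,
          eval St iv env (Xt (zs₁ ++ zs₂) t) = eval St iv' env' t := by
        intro t ht
        rcases hsh t ht with ⟨k, rfl⟩ | ⟨n, m, bs, rfl, hlen, hivs⟩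
        · show eval St iv env (Term.ivar k) = _
          rw [eval, eval, hiv'_eq k ht]
        · rw [eval_fapp St iv' env' _ bs _ (evalArgs_ivars St iv' env' bs hivs)]
          exact (henv'_spec _ ht _ bs rfl).symm
      have hmain := hV iv' env' hGoodEnv' (fun s t _ _ h => hiv'_inj h)
      calc eval St iv env (.prim φ (zs₁.map (Xt (zs₁ ++ zs₂))))
          = eval St iv' env' (.prim φ zs₁) :=
            (eval_prim_congr St iv' iv env' env φ zs₁ _
              (evalArgs_map St iv' iv env' env _ zs₁
                (fun t ht => (hpoint t (List.mem_append_left _ ht)).symm))).symm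
        _ = eval St iv' env' (.prim ψ zs₂) := hmain
        _ = eval St iv env (.prim ψ (zs₂.map (Xt (zs₁ ++ zs₂)))) :=
            eval_prim_congr St iv' iv env' env ψ zs₂ _
              (evalArgs_map St iv' iv env' env _ zs₂
                (fun t ht => (hpoint t (List.mem_append_right _ ht)).symm))
    · -- backward direction
      intro hV iv env hGoodEnv hinj
      have hvals : ∀ t ∈ zs₁ ++ zs₂, ∀ v, eval St iv env t = some v → ∃ a, v = Sum.inl a := by
        intro t ht v hv
        rcases hsh t ht with ⟨k, rfl⟩ | ⟨n, m, bs, rfl, hlen, hivs⟩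
        · rw [eval] at hv
          exact ⟨iv k, (Option.some.inj hv).symm⟩
        · cases hargs : evalArgs St iv env bs with
          | none => rw [eval_fapp_none St iv env _ bs hargs] at hv; exact absurd hv (by simp)
          | some as =>
              rw [eval_fapp St iv env _ bs as hargs] at hv
              exact (hGoodEnv _ _ _ hv).2.1 rfl
      obtain ⟨env', henv'⟩ : ∃ env' : Env A, ∀ p as, env' p as =
          if h : ∃ t, t ∈ zs₁ ++ zs₂ ∧ Xt (zs₁ ++ zs₂) t = Term.fapp p [] ∧ as = ([] : List A)
          then eval St iv env h.choose else none := ⟨_, fun _ _ => rfl⟩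
      have henv'_spec : ∀ t ∈ zs₁ ++ zs₂, ∀ p, Xt (zs₁ ++ zs₂) t = Term.fapp p [] →
          env' p [] = eval St iv env t := by
        intro t ht p hXt
        have hex : ∃ t', t' ∈ zs₁ ++ zs₂ ∧ Xt (zs₁ ++ zs₂) t' = Term.fapp p [] ∧
            ([] : List A) = [] := ⟨t, ht, hXt, rfl⟩
        rw [henv', dif_pos hex]
        obtain ⟨ht', hXt', -⟩ := hex.choose_spec
        rw [Xt_inj _ ht' ht (hXt'.trans hXt.symm)]
      have hGoodEnv' : GoodEnv env' := by
        intro p as v hv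
        rw [henv'] at hv
        split at hv
        case isFalse => exact absurd hv (by simp)
        case isTrue h =>
          obtain ⟨ht, hXt, hasnil⟩ : h.choose ∈ zs₁ ++ zs₂ ∧
              Xt (zs₁ ++ zs₂) h.choose = Term.fapp p [] ∧ as = [] := h.choose_spec
          subst hasnil
          rcases Xt_cases (zs₁ ++ zs₂) h.choose with ⟨k, hk, hx⟩ | ⟨-, hx⟩
          · rw [hx] at hXt
            exact absurd hXt (by simp)
          · rw [hXt] at hx
            injection hx with hp _
            refine ⟨by rw [hp]; rfl, fun _ => hvals _ ht v hv, fun hcontra => ?_⟩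
            rw [hp] at hcontra
            simp at hcontra
      have hpoint : ∀ t ∈ zs₁ ++ zs₂,
          eval St iv env t = eval St iv env' (Xt (zs₁ ++ zs₂) t) := by
        intro t ht
        rcases Xt_cases (zs₁ ++ zs₂) t with ⟨k, rfl, hx⟩ | ⟨hk, hx⟩
        · rw [hx, eval, eval]
        · rw [hx, eval_fapp_nil, henv'_spec t ht _ hx]
      have hmain := hV iv env' hGoodEnv'
        (fun s t hs ht h => hinj s t ((hplaced s).mp hs) ((hplaced t).mp ht) h)
      calc eval St iv env (.prim φ zs₁)
          = eval St iv env' (.prim φ (zs₁.map (Xt (zs₁ ++ zs₂)))) :=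
            eval_prim_congr St iv iv env env' φ zs₁ _
              (evalArgs_map St iv iv env env' _ zs₁
                (fun t ht => hpoint t (List.mem_append_left _ ht)))
        _ = eval St iv env' (.prim ψ (zs₂.map (Xt (zs₁ ++ zs₂)))) := hmain
        _ = eval St iv env (.prim ψ zs₂) :=
            (eval_prim_congr St iv iv env env' ψ zs₂ _
              (evalArgs_map St iv iv env env' _ zs₂
                (fun t ht => hpoint t (List.mem_append_right _ ht)))).symm

end McCarthy
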